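/- (Erdős–Rado) Let κ be a regular infinite cardinal and let ρ < κ be a nonzero cardinal. Then (2^{<κ})⁺ → (κ+1)²_ρ: for every function f from the unordered pairs of ordinals below (2^{<κ})⁺ to ρ, there is a set H of ordinals below (2^{<κ})⁺ of order type κ+1 and an ordinal α < ρ such that f({x,y}) = α for all x ≠ y in H. -/

import Mathlib

open Cardinal

universe u

/-- The order type of a set of ordinals. -/
noncomputable def setOrderType (H : Set Ordinal.{u}) : Ordinal.{u + 1} :=
  @Ordinal.type H (Subrel (· < ·) (· ∈ H))
    (inferInstanceAs (IsWellOrder H (Subrel (· < ·) (· ∈ H))))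

namespace ErdosRadoAux


noncomputable def seq (f : Ordinal.{u} → Ordinal.{u} → Ordinal.{u}) (a : Ordinal.{u}) :
    Ordinal.{u} → Ordinal.{u} :=
  fun ξ => sInf {y | ∀ β, β < ξ → seq f a β < y ∧ f y (seq f a β) = f a (seq f a β)}
termination_by ξ => ξ
decreasing_by exact ‹_›

def cand (f : Ordinal.{u} → Ordinal.{u} → Ordinal.{u}) (a ξ : Ordinal.{u}) : Set Ordinal.{u} :=
  {y | ∀ β, β < ξ → seq f a β < y ∧ f y (seq f a β) = f a (seq f a β)}

theorem seq_eq (f : Ordinal.{u} → Ordinal.{u} → Ordinal.{u}) (a ξ : Ordinal.{u}) :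
    seq f a ξ = sInf (cand f a ξ) := by rw [seq]; rfl

theorem self_mem_cand {f a ξ} (h : ∀ β, β < ξ → seq f a β < a) : a ∈ cand f a ξ :=
  fun β hβ => ⟨h β hβ, rfl⟩

theorem seq_le_self {f a ξ} (h : ∀ β, β < ξ → seq f a β < a) : seq f a ξ ≤ a := by
  rw [seq_eq]; exact csInf_le' (self_mem_cand h)

theorem seq_mem_cand {f a ξ} (h : ∀ β, β < ξ → seq f a β < a) : seq f a ξ ∈ cand f a ξ := by
  rw [seq_eq]; exact csInf_mem ⟨a, self_mem_cand h⟩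

/-- The length of the approximation process: the first stage where the sequence hits `a`. -/
noncomputable def len (f : Ordinal.{u} → Ordinal.{u} → Ordinal.{u}) (a : Ordinal.{u}) :
    Ordinal.{u} :=
  sInf {ξ | ¬ seq f a ξ < a}

theorem len_nonempty (f : Ordinal.{u} → Ordinal.{u} → Ordinal.{u}) (a : Ordinal.{u}) :
    {ξ | ¬ seq f a ξ < a}.Nonempty := by
  by_contra h
  rw [Set.not_nonempty_iff_eq_empty, Set.eq_empty_iff_forall_notMem] at h
  simp only [Set.mem_setOf_eq, not_not] at h
  have hmono : StrictMono (seq f a) := by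
    intro β ξ hβξ
    exact (seq_mem_cand (fun β' _ => h β') β hβξ).1
  have h1 := hmono.le_apply (x := a + 1)
  have h2 : a < a + 1 := by
    rw [Ordinal.add_one_eq_succ]; exact Order.lt_succ a
  exact absurd (h2.trans (h1.trans_lt (h (a + 1)))) (lt_irrefl a)

theorem seq_lt_of_lt_len {f a β} (h : β < len f a) : seq f a β < a := by
  by_contra hc
  exact absurd (csInf_le' (s := {ξ | ¬ seq f a ξ < a}) hc) (not_le.2 h)

theorem seq_len_eq {f a} : seq f a (len f a) = a := by
  have h1 : ¬ seq f a (len f a) < a := csInf_mem (len_nonempty f a)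
  have h2 : seq f a (len f a) ≤ a := seq_le_self (fun β hβ => seq_lt_of_lt_len hβ)
  exact le_antisymm h2 (not_lt.1 h1)

theorem seq_mem_cand_of_le_len {f a ξ} (h : ξ ≤ len f a) : seq f a ξ ∈ cand f a ξ :=
  seq_mem_cand (fun β hβ => seq_lt_of_lt_len (hβ.trans_le h))

theorem seq_strictMonoOn {f a} {β ξ : Ordinal} (hξ : ξ ≤ len f a) (h : β < ξ) :
    seq f a β < seq f a ξ :=
  (seq_mem_cand_of_le_len hξ β h).1

/-- Two ordinals with the same trace have the same sequence. -/
theorem seq_congr {f} {a a' : Ordinal.{u}} (ξ : Ordinal.{u})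
    (h : ∀ β, β < ξ → f a (seq f a β) = f a' (seq f a β)) : seq f a ξ = seq f a' ξ := by
  induction ξ using Ordinal.induction with
  | h ξ IH =>
    have hc : cand f a ξ = cand f a' ξ := by
      ext y
      constructor <;> intro hy β hβ <;>
        · have e := IH β hβ (fun β' hβ' => h β' (hβ'.trans hβ))
          have h2 := h β hβ
          first
          | (rw [← e, ← h2]; exact hy β hβ)
          | (rw [e] at h2; rw [e, h2]; exact hy β hβ)
    rw [seq_eq, seq_eq, hc]

theorem eq_of_len_eq_of_trace_eq {f} {a a' : Ordinal.{u}} (hl : len f a = len f a')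
    (h : ∀ β, β < len f a → f a (seq f a β) = f a' (seq f a' β)) : a = a' := by
  have key : ∀ ξ, ξ ≤ len f a → seq f a ξ = seq f a' ξ := by
    intro ξ hξ
    induction ξ using Ordinal.induction with
    | h ξ IH =>
      apply seq_congr
      intro β hβ
      have e := IH β hβ ((le_of_lt hβ).trans hξ)
      have h2 := h β (hβ.trans_le hξ)
      rw [e] at h2
      rw [e]
      exact h2
  calc a = seq f a (len f a) := seq_len_eq.symm
    _ = seq f a' (len f a) := key _ le_rfl
    _ = a' := by rw [hl, seq_len_eq]


theorem self_le_powerlt {κ : Cardinal.{u}} : κ ≤ 2 ^< κ := by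
  by_contra h
  push_neg at h
  have h1 : (2 : Cardinal) ^ (2 ^< κ) ≤ 2 ^< κ := le_powerlt 2 h
  exact absurd h1 (not_le.2 (cantor _))

theorem pow_le_powerlt {κ ρ c : Cardinal.{u}} (hκ : ℵ₀ ≤ κ) (hρκ : ρ < κ) (hc : c < κ) :
    ρ ^ c ≤ 2 ^< κ := by
  have h1 : ρ ^ c ≤ ((2 : Cardinal) ^ ρ) ^ c := power_le_power_right (cantor ρ).le
  rw [← power_mul] at h1
  exact h1.trans (le_powerlt 2 (mul_lt_of_lt hκ hρκ hc))


theorem aleph0_le_powerlt_self {κ : Cardinal.{u}} (hκ : ℵ₀ ≤ κ) : ℵ₀ ≤ 2 ^< κ :=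
  hκ.trans self_le_powerlt

theorem exists_long (κ ρ : Cardinal.{u}) (hκ : κ.IsRegular) (hρκ : ρ < κ)
    (f : Ordinal.{u} → Ordinal.{u} → Ordinal.{u})
    (hran : ∀ x y, x < (Order.succ (2 ^< κ)).ord → y < (Order.succ (2 ^< κ)).ord →
      f x y < ρ.ord) :
    ∃ a, a < (Order.succ (2 ^< κ)).ord ∧ κ.ord ≤ len f a := by
  set μ := 2 ^< κ with hμ
  set lam := (Order.succ μ).ord with hlam
  by_contra hcon
  push_neg at hcon
  have hbad : ∀ a ∈ Set.Iio lam, len f a < κ.ord := fun a ha => hcon a ha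
  -- trace bound
  have htr : ∀ a : Ordinal, a < lam → ∀ β, β < len f a → f a (seq f a β) < ρ.ord := by
    intro a ha β hβ
    exact hran a (seq f a β) ha ((seq_lt_of_lt_len hβ).trans ha)
  -- the union decomposition
  have hcover : Set.Iio lam = ⋃ ξ : Set.Iio κ.ord, {a | a < lam ∧ len f a = ξ.1} := by
    ext a
    simp only [Set.mem_Iio, Set.mem_iUnion, Set.mem_setOf_eq]
    constructor
    · intro ha
      exact ⟨⟨len f a, hbad a ha⟩, ha, rfl⟩
    · rintro ⟨ξ, ha, -⟩
      exact ha
  -- each piece is small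
  have hpiece : ∀ ξ : Set.Iio κ.ord,
      #{a | a < lam ∧ len f a = ξ.1} ≤ Cardinal.lift.{u+1} μ := by
    intro ξ
    have hinj : Function.Injective
        (fun a : {a | a < lam ∧ len f a = ξ.1} =>
          (fun β : Set.Iio ξ.1 =>
            (⟨f a.1 (seq f a.1 β.1), htr a.1 a.2.1 β.1 (lt_of_lt_of_eq β.2 a.2.2.symm)⟩ : Set.Iio ρ.ord))) := by
      intro a a' he
      have hl : len f a.1 = len f a'.1 := by rw [a.2.2, a'.2.2]
      apply Subtype.ext
      apply eq_of_len_eq_of_trace_eq hl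
      intro β hβ
      have hβξ : β < ξ.1 := a.2.2 ▸ hβ
      have := congrFun he ⟨β, hβξ⟩
      exact congrArg Subtype.val this
    have h1 : #{a | a < lam ∧ len f a = ξ.1} ≤ #(Set.Iio ξ.1 → Set.Iio ρ.ord) :=
      Cardinal.mk_le_of_injective hinj
    rw [← power_def, Ordinal.mk_Iio_ordinal, Ordinal.mk_Iio_ordinal, ← lift_power,
      card_ord] at h1
    exact h1.trans (lift_le.2 (pow_le_powerlt hκ.aleph0_le hρκ (Cardinal.lt_ord.1 ξ.2)))
  -- conclude
  have hle : #(Set.Iio lam) ≤ #(Set.Iio κ.ord) * Cardinal.lift.{u+1} μ := by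
    rw [hcover]
    exact (Cardinal.mk_iUnion_le _).trans (mul_le_mul' le_rfl (ciSup_le' hpiece))
  rw [Ordinal.mk_Iio_ordinal, Ordinal.mk_Iio_ordinal, card_ord, card_ord, ← lift_mul, lift_le] at hle
  have hκμ : κ * μ = μ := mul_eq_right (aleph0_le_powerlt_self hκ.aleph0_le) self_le_powerlt
    (ne_of_gt hκ.pos)
  rw [hκμ] at hle
  exact absurd hle (not_le.2 (Order.lt_succ μ))



theorem setOrderType_Iio (o : Ordinal.{u}) :
    setOrderType (Set.Iio o) = Ordinal.lift.{u + 1} o :=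
  (Ordinal.type_subrel _ o).trans (Ordinal.typein_ordinal o)

theorem setOrderType_le_of_subset {s t : Set Ordinal.{u}} (h : s ⊆ t) :
    setOrderType s ≤ setOrderType t := by
  unfold setOrderType
  rw [Ordinal.type_le_iff']
  exact ⟨⟨⟨Set.inclusion h, Set.inclusion_injective h⟩, Iff.rfl⟩⟩

theorem card_setOrderType (s : Set Ordinal.{u}) : (setOrderType s).card = #s :=
  Ordinal.card_type _

theorem setOrderType_eq {s : Set Ordinal.{u}} {κ : Cardinal.{u}} (hsub : s ⊆ Set.Iio κ.ord)
    (hcard : Cardinal.lift.{u + 1} κ ≤ #s) :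
    setOrderType s = Ordinal.lift.{u + 1} κ.ord := by
  apply le_antisymm
  · rw [← setOrderType_Iio]
    exact setOrderType_le_of_subset hsub
  · rw [Cardinal.lift_ord, Cardinal.ord_le, card_setOrderType]
    exact hcard

theorem isRegular_lift {κ : Cardinal.{u}} (h : κ.IsRegular) :
    (Cardinal.lift.{u + 1} κ).IsRegular := by
  refine ⟨aleph0_le_lift.2 h.1, ?_⟩
  rw [← Cardinal.lift_ord, ← Ordinal.lift_cof]
  exact lift_le.2 h.2

theorem exists_big_fiber {κ ρ : Cardinal.{u}} (hκ : κ.IsRegular) (hρκ : ρ < κ)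
    (g : Set.Iio κ.ord → Set.Iio ρ.ord) :
    ∃ i, Cardinal.lift.{u + 1} κ ≤ #{β : Set.Iio κ.ord // g β = i} := by
  by_contra h
  push_neg at h
  have h1 : #(Σ i : Set.Iio ρ.ord, {β // g β = i}) = #(Set.Iio κ.ord) :=
    mk_congr (Equiv.sigmaFiberEquiv g)
  rw [mk_sigma, Ordinal.mk_Iio_ordinal, card_ord] at h1
  have h2 : Cardinal.sum (fun i : Set.Iio ρ.ord => #{β // g β = i}) <
      Cardinal.lift.{u + 1} κ := by
    apply sum_lt_of_isRegular (isRegular_lift hκ) ?_ h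
    rw [Ordinal.mk_Iio_ordinal, card_ord]
    exact lift_lt.2 hρκ
  exact absurd h1 (ne_of_lt h2)

end ErdosRadoAux

open ErdosRadoAux


/-- Erdős–Rado: if `κ` is a regular infinite cardinal and `0 ≠ ρ < κ`, then
`(2^{<κ})⁺ → (κ+1)²_ρ`: for every (symmetric) function `f` on pairs of ordinals below
`(2^{<κ})⁺` with values below `ρ`, there is a set `H` of ordinals below `(2^{<κ})⁺` of
order type `κ+1` and an ordinal `α < ρ` with `f {x,y} = α` for all `x ≠ y` in `H`. -/
theorem erdosRado (κ ρ : Cardinal.{u}) (hκ : κ.IsRegular) (hρ0 : ρ ≠ 0) (hρκ : ρ < κ)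
    (f : Ordinal.{u} → Ordinal.{u} → Ordinal.{u})
    (hsymm : ∀ x y, f x y = f y x)
    (hran : ∀ x y, x < (Order.succ (2 ^< κ)).ord → y < (Order.succ (2 ^< κ)).ord →
      f x y < ρ.ord) :
    ∃ H : Set Ordinal.{u}, H ⊆ Set.Iio (Order.succ (2 ^< κ)).ord ∧
      setOrderType H = Ordinal.lift.{u + 1} (κ.ord + 1) ∧
      ∃ α : Ordinal.{u}, α < ρ.ord ∧ ∀ x ∈ H, ∀ y ∈ H, x ≠ y → f x y = α := by
  obtain ⟨a, halam, hlen⟩ := exists_long κ ρ hκ hρκ f hran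
  have hseqlt : ∀ β, β < κ.ord → seq f a β < a := fun β hβ =>
    seq_lt_of_lt_len (hβ.trans_le hlen)
  have hseqlam : ∀ β, β < κ.ord → seq f a β < (Order.succ (2 ^< κ)).ord := fun β hβ =>
    (hseqlt β hβ).trans halam
  obtain ⟨i, hi⟩ := exists_big_fiber hκ hρκ
    (fun β : Set.Iio κ.ord => (⟨f a (seq f a β.1),
      hran a _ halam (hseqlam β.1 β.2)⟩ : Set.Iio ρ.ord))
  set S : Set Ordinal.{u} := {β | β < κ.ord ∧ f a (seq f a β) = i.1} with hSdef
  have hSsub : S ⊆ Set.Iio κ.ord := fun β hβ => hβ.1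
  have hScard : Cardinal.lift.{u + 1} κ ≤ #S := by
    refine hi.trans (Cardinal.mk_le_of_injective
      (f := fun p => (⟨p.1.1, p.1.2, congrArg Subtype.val p.2⟩ : S)) ?_)
    intro p q h
    exact Subtype.ext (Subtype.ext (Subtype.mk_eq_mk.1 h))
  have hot : setOrderType S = Ordinal.lift.{u + 1} κ.ord := setOrderType_eq hSsub hScard
  have hiso : Nonempty (Subrel ((· < ·) : Ordinal.{u} → Ordinal.{u} → Prop) (· ∈ Set.Iio κ.ord) ≃r
      Subrel ((· < ·) : Ordinal.{u} → Ordinal.{u} → Prop) (· ∈ S)) := by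
    apply Ordinal.type_eq.1
    show setOrderType (Set.Iio κ.ord) = setOrderType S
    rw [setOrderType_Iio, hot]
  obtain ⟨e⟩ := hiso
  have hmono : ∀ β γ : Ordinal, β < γ → γ < κ.ord → seq f a β < seq f a γ :=
    fun β γ h hγ => seq_strictMonoOn ((le_of_lt hγ).trans hlen) h
  set H : Set Ordinal.{u} := (seq f a) '' S ∪ {a} with hHdef
  have hmemH : ∀ β ∈ S, seq f a β ∈ H := fun β hβ => Or.inl ⟨β, hβ, rfl⟩
  have haH : a ∈ H := Or.inr rfl
  have hsucc : κ.ord < κ.ord + 1 := by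
    rw [Ordinal.add_one_eq_succ]; exact Order.lt_succ _
  refine ⟨H, ?_, ?_, i.1, i.2, ?_⟩
  · rintro x (⟨β, hβ, rfl⟩ | rfl)
    · exact hseqlam β hβ.1
    · exact halam
  · -- order type computation
    have key : Nonempty (Subrel ((· < ·) : Ordinal.{u} → Ordinal.{u} → Prop)
        (· ∈ Set.Iio (κ.ord + 1)) ≃r Subrel ((· < ·) : Ordinal.{u} → Ordinal.{u} → Prop) (· ∈ H)) := by
      let φ : (Set.Iio (κ.ord + 1) : Set Ordinal.{u}) → (H : Set Ordinal.{u}) := fun p =>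
        if h : p.1 < κ.ord then ⟨seq f a (e ⟨p.1, h⟩).1, hmemH _ (e ⟨p.1, h⟩).2⟩
        else ⟨a, haH⟩
      have hφmono : ∀ p q, Subrel ((· < ·) : Ordinal.{u} → Ordinal.{u} → Prop)
          (· ∈ Set.Iio (κ.ord + 1)) p q →
          Subrel ((· < ·) : Ordinal.{u} → Ordinal.{u} → Prop) (· ∈ H) (φ p) (φ q) := by
        intro p q hpq
        have hpq' : p.1 < q.1 := hpq
        show (φ p).1 < (φ q).1
        by_cases h2 : q.1 < κ.ord
        · have h1 : p.1 < κ.ord := hpq'.trans h2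
          have he : ((e ⟨p.1, h1⟩).1 : Ordinal) < (e ⟨q.1, h2⟩).1 := by
            have : Subrel ((· < ·) : Ordinal.{u} → Ordinal.{u} → Prop) (· ∈ Set.Iio κ.ord)
                ⟨p.1, h1⟩ ⟨q.1, h2⟩ := hpq'
            exact e.map_rel_iff.2 this
          simp only [φ, dif_pos h1, dif_pos h2]
          exact hmono _ _ he (hSsub (e ⟨q.1, h2⟩).2)
        · by_cases h1 : p.1 < κ.ord
          · simp only [φ, dif_pos h1, dif_neg h2]
            exact hseqlt _ (hSsub (e ⟨p.1, h1⟩).2)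
          · exfalso
            have hlt : ∀ z : Ordinal.{u}, z < κ.ord + 1 → z ≤ κ.ord := fun z hz => by
              rwa [Ordinal.add_one_eq_succ, Order.lt_succ_iff] at hz
            have hq : q.1 ≤ κ.ord := hlt _ q.2
            exact absurd (hpq'.trans_le hq) h1
      have hφsurj : Function.Surjective φ := by
        rintro ⟨y, hy | rfl⟩
        · obtain ⟨β, hβ, rfl⟩ := hy
          have h1 : ((e.symm ⟨β, hβ⟩).1 : Ordinal) < κ.ord := (e.symm ⟨β, hβ⟩).2
          refine ⟨⟨(e.symm ⟨β, hβ⟩).1, h1.trans hsucc⟩, ?_⟩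
          simp only [φ, dif_pos h1]
          apply Subtype.ext
          show seq f a (e ⟨(e.symm ⟨β, hβ⟩).1, h1⟩).1 = seq f a β
          have h3 : (⟨(e.symm ⟨β, hβ⟩).1, h1⟩ : (Set.Iio κ.ord : Set Ordinal.{u})) =
              e.symm ⟨β, hβ⟩ := Subtype.ext rfl
          rw [h3, e.apply_symm_apply]
        · refine ⟨⟨κ.ord, hsucc⟩, ?_⟩
          simp only [φ, dif_neg (lt_irrefl κ.ord)]
      exact ⟨RelIso.ofSurjective (RelEmbedding.ofMonotone φ hφmono) hφsurj⟩
    have h4 : setOrderType (Set.Iio (κ.ord + 1)) = setOrderType H := Ordinal.type_eq.2 key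
    rw [← h4, setOrderType_Iio]
  · -- homogeneity
    have hpair : ∀ β ∈ S, ∀ γ ∈ S, β < γ → f (seq f a γ) (seq f a β) = i.1 := by
      intro β hβ γ hγ h
      have hm := seq_mem_cand_of_le_len (f := f) (a := a) ((le_of_lt (hSsub hγ)).trans hlen)
      rw [(hm β h).2]
      exact hβ.2
    have hinj : ∀ β ∈ S, ∀ γ ∈ S, seq f a β = seq f a γ → β = γ := by
      intro β hβ γ hγ h
      rcases lt_trichotomy β γ with hc | hc | hc
      · exact absurd h (ne_of_lt (hmono _ _ hc (hSsub hγ)))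
      · exact hc
      · exact absurd h.symm (ne_of_lt (hmono _ _ hc (hSsub hβ)))
    rintro x (⟨β, hβ, rfl⟩ | rfl) y (⟨γ, hγ, rfl⟩ | rfl) hxy
    · rcases lt_trichotomy β γ with h | h | h
      · rw [hsymm]
        exact hpair β hβ γ hγ h
      · exact absurd (congrArg (seq f a) h) hxy
      · exact hpair γ hγ β hβ h
    · rw [hsymm]
      exact hβ.2
    · exact hγ.2
    · exact absurd rfl hxy
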